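/- Let 0 < α < ω₁, X a topological space and Y a topological space with a σ-disjoint base. If f : X → Y is of the α'th functionally Lebesgue class (preimages of open sets are of the α'th functionally additive class) and f has a σ-sfd base, then f has a σ-sfd base consisting of functionally ambiguous sets of class α. -/

import Mathlib

open Set Topology Ordinal

/-- A family of sets is discrete if every point has an open neighborhood
meeting at most one member of the family. -/
def DiscreteFam {X I : Type*} [TopologicalSpace X] (U : I → Set X) : Prop :=
  ∀ x : X, ∃ V : Set X, IsOpen V ∧ x ∈ V ∧
    ∀ i j : I, (V ∩ U i).Nonempty → (V ∩ U j).Nonempty → i = j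

/-- A set is functionally closed (a zero set) if it is the preimage of `{0}`
under a continuous real-valued function. -/
def FunClosed {X : Type*} [TopologicalSpace X] (F : Set X) : Prop :=
  ∃ f : X → ℝ, Continuous f ∧ F = f ⁻¹' {0}

/-- A set is functionally open if its complement is functionally closed. -/
def FunOpen {X : Type*} [TopologicalSpace X] (U : Set X) : Prop :=
  FunClosed Uᶜ

/-- The pair (α'th functionally multiplicative class, α'th functionally additive class),
defined by transfinite recursion. -/
noncomputable def FunClassPair (X : Type*) [TopologicalSpace X] (α : Ordinal) :
    Set (Set X) × Set (Set X) :=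
  if α = 0 then ({F | FunClosed F}, {U | FunOpen U})
  else
    ({ A | ∃ f : ℕ → Set X, (∀ n, ∃ β, ∃ _ : β < α, f n ∈ (FunClassPair X β).2) ∧ A = ⋂ n, f n },
     { A | ∃ f : ℕ → Set X, (∀ n, ∃ β, ∃ _ : β < α, f n ∈ (FunClassPair X β).1) ∧ A = ⋃ n, f n })
termination_by α

/-- The α'th functionally multiplicative class. -/
noncomputable def FunMul (X : Type*) [TopologicalSpace X] (α : Ordinal) : Set (Set X) :=
  (FunClassPair X α).1

/-- The α'th functionally additive class. -/
noncomputable def FunAdd (X : Type*) [TopologicalSpace X] (α : Ordinal) : Set (Set X) :=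
  (FunClassPair X α).2

/-- Functionally ambiguous sets of class α. -/
noncomputable def FunAmb {X : Type*} [TopologicalSpace X] (α : Ordinal) (A : Set X) : Prop :=
  A ∈ FunAdd X α ∧ A ∈ FunMul X α

/-- A family is strongly functionally discrete (sfd). -/
def SFDFam {X I : Type*} [TopologicalSpace X] (A : I → Set X) : Prop :=
  ∃ U : I → Set X, DiscreteFam U ∧ (∀ i, FunOpen (U i)) ∧ ∀ i, closure (A i) ⊆ U i

/-- A collection of sets is sfd (viewed as a family indexed by itself). -/
def SFDSet {X : Type*} [TopologicalSpace X] (𝒜 : Set (Set X)) : Prop :=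
  SFDFam (fun b : 𝒜 => (b : Set X))

/-- A collection of sets is a well sfd-family. -/
def WellSFDSet {X : Type*} [TopologicalSpace X] (𝒜 : Set (Set X)) : Prop :=
  ∃ U F : 𝒜 → Set X, DiscreteFam U ∧ DiscreteFam F ∧
    (∀ b, FunOpen (U b)) ∧ (∀ b, FunClosed (F b)) ∧
    ∀ b : 𝒜, (b : Set X) ⊆ F b ∧ F b ⊆ U b

/-- An indexed family is σ-sfd if the index set splits into countably many pieces
on each of which the family is sfd. -/
def SigmaSFDFam {X I : Type*} [TopologicalSpace X] (A : I → Set X) : Prop :=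
  ∃ J : ℕ → Set I, (∀ n, SFDFam (fun i : J n => A i)) ∧ (⋃ n, J n) = Set.univ

/-- `B` is a base for the mapping `f`: every preimage of an open set is a union
of members of `B`. -/
def IsBaseFor {X Y : Type*} [TopologicalSpace X] [TopologicalSpace Y]
    (B : Set (Set X)) (f : X → Y) : Prop :=
  ∀ V : Set Y, IsOpen V → ∃ S ⊆ B, f ⁻¹' V = ⋃₀ S

/-- `f` has a σ-strongly-functionally-discrete base. -/
def SigmaSFD {X Y : Type*} [TopologicalSpace X] [TopologicalSpace Y] (f : X → Y) : Prop :=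
  ∃ B : ℕ → Set (Set X), (∀ n, SFDSet (B n)) ∧ IsBaseFor (⋃ n, B n) f

/-- `f` has a σ-sfd base consisting of functionally ambiguous sets of class α. -/
noncomputable def SigmaSFDAmb {X Y : Type*} [TopologicalSpace X] [TopologicalSpace Y]
    (α : Ordinal) (f : X → Y) : Prop :=
  ∃ B : ℕ → Set (Set X), (∀ n, SFDSet (B n)) ∧ (∀ n, ∀ b ∈ B n, FunAmb α b) ∧
    IsBaseFor (⋃ n, B n) f

/-- `f` belongs to the α'th functionally Lebesgue class. -/
noncomputable def LebClass {X Y : Type*} [TopologicalSpace X] [TopologicalSpace Y]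
    (α : Ordinal) (f : X → Y) : Prop :=
  ∀ V : Set Y, IsOpen V → f ⁻¹' V ∈ FunAdd X α

/-- `Y` has a σ-disjoint base. -/
def SigmaDisjointBase (Y : Type*) [TopologicalSpace Y] : Prop :=
  ∃ V : ℕ → Set (Set Y), (∀ m, (V m).PairwiseDisjoint id) ∧
    TopologicalSpace.IsTopologicalBasis (⋃ m, V m)

section Aux
variable {X : Type*} [TopologicalSpace X]

lemma funClosed_isClosed {F : Set X} (h : FunClosed F) : IsClosed F := by
  obtain ⟨f, hf, rfl⟩ := h
  exact isClosed_singleton.preimage hf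

lemma funClosed_inter {F G : Set X} (hF : FunClosed F) (hG : FunClosed G) :
    FunClosed (F ∩ G) := by
  obtain ⟨f, hf, rfl⟩ := hF
  obtain ⟨g, hg, rfl⟩ := hG
  refine ⟨fun x => |f x| + |g x|, by continuity, ?_⟩
  ext x
  simp only [mem_inter_iff, mem_preimage, mem_singleton_iff]
  constructor
  · rintro ⟨h1, h2⟩; simp [h1, h2]
  · intro h
    have h1 : |f x| = 0 ∧ |g x| = 0 := by
      constructor <;> nlinarith [abs_nonneg (f x), abs_nonneg (g x)]
    exact ⟨abs_eq_zero.1 h1.1, abs_eq_zero.1 h1.2⟩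

lemma funClosed_eq_iInter {F : Set X} (h : FunClosed F) :
    ∃ W : ℕ → Set X, (∀ n, FunOpen (W n)) ∧ F = ⋂ n, W n := by
  obtain ⟨f, hf, rfl⟩ := h
  refine ⟨fun n => {x | |f x| < 1/(n+1)}, fun n => ?_, ?_⟩
  · refine ⟨fun x => max (1/(n+1) - |f x|) 0, by continuity, ?_⟩
    ext x
    simp only [mem_compl_iff, mem_setOf_eq, not_lt, mem_preimage, mem_singleton_iff,
      max_eq_right_iff, sub_nonpos]
  · ext x
    simp only [mem_preimage, mem_singleton_iff, mem_iInter, mem_setOf_eq]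
    constructor
    · intro h n; simp [h]; positivity
    · intro h
      by_contra hne
      have hpos : 0 < |f x| := abs_pos.2 hne
      obtain ⟨n, hn⟩ := exists_nat_one_div_lt hpos
      exact absurd (h n) (not_lt.2 (le_of_lt hn))
end Aux
section Aux2
variable {X : Type*} [TopologicalSpace X]

lemma funMul_zero : FunMul X 0 = {F | FunClosed F} := by
  rw [FunMul, FunClassPair]; simp

lemma funAdd_zero : FunAdd X 0 = {U | FunOpen U} := by
  rw [FunAdd, FunClassPair]; simp

lemma funMul_def {α : Ordinal} (hα : α ≠ 0) :
    FunMul X α = { A | ∃ g : ℕ → Set X,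
      (∀ n, ∃ β, ∃ _ : β < α, g n ∈ FunAdd X β) ∧ A = ⋂ n, g n } := by
  rw [FunMul, FunClassPair, if_neg hα]; rfl

lemma funAdd_def {α : Ordinal} (hα : α ≠ 0) :
    FunAdd X α = { A | ∃ g : ℕ → Set X,
      (∀ n, ∃ β, ∃ _ : β < α, g n ∈ FunMul X β) ∧ A = ⋃ n, g n } := by
  rw [FunAdd, FunClassPair, if_neg hα]; rfl

lemma funClosed_mem_funMul {α : Ordinal} (hα : α ≠ 0) {F : Set X} (hF : FunClosed F) :
    F ∈ FunMul X α := by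
  obtain ⟨W, hW, rfl⟩ := funClosed_eq_iInter hF
  rw [funMul_def hα]
  exact ⟨W, fun n => ⟨0, pos_iff_ne_zero.2 hα, by rw [funAdd_zero]; exact hW n⟩, rfl⟩

lemma funMul_mono {β α : Ordinal} (h : β < α) : FunMul X β ⊆ FunMul X α := by
  intro A hA
  have hα : α ≠ 0 := (lt_of_le_of_lt (zero_le (a := β)) h).ne'
  rcases eq_or_ne β 0 with rfl | hβ
  · rw [funMul_zero] at hA
    exact funClosed_mem_funMul hα hA
  · rw [funMul_def hβ] at hA
    rw [funMul_def hα]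
    obtain ⟨g, hg, rfl⟩ := hA
    exact ⟨g, fun n => by obtain ⟨γ, hγ, hm⟩ := hg n; exact ⟨γ, hγ.trans h, hm⟩, rfl⟩

lemma funMul_mem_funAdd {β α : Ordinal} (h : β < α) {A : Set X} (hA : A ∈ FunMul X β) :
    A ∈ FunAdd X α := by
  have hα : α ≠ 0 := (lt_of_le_of_lt (zero_le (a := β)) h).ne'
  rw [funAdd_def hα]
  exact ⟨fun _ => A, fun _ => ⟨β, h, hA⟩, (iUnion_const A).symm⟩

lemma funClosed_inter_funMul {α : Ordinal} {F A : Set X} (hF : FunClosed F)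
    (hA : A ∈ FunMul X α) : F ∩ A ∈ FunMul X α := by
  rcases eq_or_ne α 0 with rfl | hα
  · rw [funMul_zero] at hA ⊢
    exact funClosed_inter hF hA
  obtain ⟨W, hW, hFeq⟩ := funClosed_eq_iInter hF
  rw [funMul_def hα] at hA ⊢
  obtain ⟨g, hg, rfl⟩ := hA
  refine ⟨fun n => if Even n then W (n/2) else g (n/2), fun n => ?_, ?_⟩
  · by_cases hn : Even n
    · simp only [if_pos hn]
      exact ⟨0, pos_iff_ne_zero.2 hα, by rw [funAdd_zero]; exact hW _⟩
    · simp only [if_neg hn]; exact hg _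
  · ext x
    simp only [mem_inter_iff, mem_iInter, hFeq]
    constructor
    · intro ⟨h1, h2⟩ n
      by_cases hn : Even n
      · simpa only [if_pos hn] using h1 _
      · simpa only [if_neg hn] using h2 _
    · intro h
      constructor
      · intro n
        have := h (2*n)
        rw [if_pos ⟨n, two_mul n⟩] at this
        simpa using this
      · intro n
        have := h (2*n+1)
        rw [if_neg (by simp [Nat.even_add_one, parity_simps])] at this
        have h2 : (2*n+1)/2 = n := by omega
        rwa [h2] at this

end Aux2
section Aux3
variable {X : Type*} [TopologicalSpace X]

lemma funClosed_inter_funAdd {α : Ordinal} (hα : α ≠ 0) {F A : Set X} (hF : FunClosed F)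
    (hA : A ∈ FunAdd X α) : F ∩ A ∈ FunAdd X α := by
  rw [funAdd_def hα] at hA ⊢
  obtain ⟨g, hg, rfl⟩ := hA
  rw [inter_iUnion]
  refine ⟨fun n => F ∩ g n, fun n => ?_, rfl⟩
  obtain ⟨β, hβ, hm⟩ := hg n
  exact ⟨β, hβ, funClosed_inter_funMul hF hm⟩

/-- The union of a discrete family of functionally open sets is functionally open. -/
lemma funOpen_iUnion_discrete {I : Type*} {U : I → Set X} (hd : DiscreteFam U)
    (ho : ∀ i, FunOpen (U i)) : FunOpen (⋃ i, U i) := by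
  classical
  choose g hgc hgz using ho
  have key : ∀ i x, x ∈ U i ↔ g i x ≠ 0 := by
    intro i x
    rw [← not_iff_not, not_not, ← mem_compl_iff, hgz i]
    exact Iff.rfl
  set H : X → ℝ := fun x => if h : ∃ i, x ∈ U i then |g h.choose x| else 0 with hHdef
  refine ⟨H, ?_, ?_⟩
  · rw [continuous_iff_continuousAt]
    intro x
    obtain ⟨V, hVo, hxV, hV1⟩ := hd x
    by_cases hm : ∃ i, (V ∩ U i).Nonempty
    · obtain ⟨i0, hi0⟩ := hm
      have heq : ∀ y ∈ V, H y = |g i0 y| := by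
        intro y hy
        by_cases hy' : ∃ i, y ∈ U i
        · have he : hy'.choose = i0 := hV1 _ _ ⟨y, hy, hy'.choose_spec⟩ hi0
          simp only [hHdef, dif_pos hy', he]
        · have hnot : y ∉ U i0 := fun h => hy' ⟨i0, h⟩
          have hg0 : g i0 y = 0 := by
            by_contra h; exact hnot ((key i0 y).2 h)
          simp [hHdef, dif_neg hy', hg0]
      exact (((hgc i0).abs).continuousAt).congr
        (Filter.eventuallyEq_of_mem (hVo.mem_nhds hxV) (fun y hy => (heq y hy).symm))
    · have heq : ∀ y ∈ V, H y = 0 := by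
        intro y hy
        have hy' : ¬ ∃ i, y ∈ U i := fun ⟨i, h⟩ => hm ⟨i, y, hy, h⟩
        simp [hHdef, dif_neg hy']
      exact (continuousAt_const (x := x) (y := (0:ℝ))).congr
        (Filter.eventuallyEq_of_mem (hVo.mem_nhds hxV) (fun y hy => (heq y hy).symm))
  · ext x
    simp only [mem_compl_iff, mem_iUnion, mem_preimage, mem_singleton_iff, not_exists]
    constructor
    · intro h
      have hx : ¬ ∃ i, x ∈ U i := fun ⟨i, hi⟩ => h i hi
      simp [hHdef, dif_neg hx]
    · intro h i hx
      have hex : ∃ i, x ∈ U i := ⟨i, hx⟩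
      rw [hHdef] at h
      simp only [dif_pos hex] at h
      exact (key _ x).1 hex.choose_spec (abs_eq_zero.1 h)

/-- The union of a discrete family of functionally closed sets, each contained in a
corresponding functionally open set of the discrete witness, is functionally closed. -/
lemma funClosed_iUnion_discrete {I : Type*} {F U : I → Set X} (hd : DiscreteFam U)
    (ho : ∀ i, FunOpen (U i)) (hc : ∀ i, FunClosed (F i)) (hFU : ∀ i, F i ⊆ U i) :
    FunClosed (⋃ i, F i) := by
  classical
  choose g hgc hgz using ho
  choose h hhc hhz using hc
  have keyU : ∀ i x, x ∈ U i ↔ g i x ≠ 0 := by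
    intro i x
    rw [← not_iff_not, not_not, ← mem_compl_iff, hgz i]
    exact Iff.rfl
  have keyF : ∀ i x, x ∈ F i ↔ h i x = 0 := by
    intro i x; rw [hhz i]; exact Iff.rfl
  have hpos : ∀ i x, 0 < |g i x| + |h i x| := by
    intro i x
    rcases (abs_nonneg (g i x)).lt_or_eq with hg | hg
    · linarith [abs_nonneg (h i x)]
    rcases (abs_nonneg (h i x)).lt_or_eq with hh | hh
    · linarith
    exfalso
    have hx1 : x ∈ F i := (keyF i x).2 (abs_eq_zero.1 hh.symm)
    have hx2 : x ∉ U i := fun hu => (keyU i x).1 hu (abs_eq_zero.1 hg.symm)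
    exact hx2 (hFU i hx1)
  set φ : I → X → ℝ := fun i x => |g i x| / (|g i x| + |h i x|) with hφdef
  have hφc : ∀ i, Continuous (φ i) :=
    fun i => ((hgc i).abs).div (((hgc i).abs).add ((hhc i).abs)) (fun x => (hpos i x).ne')
  have hφ1 : ∀ i x, x ∈ F i ↔ φ i x = 1 := by
    intro i x
    rw [hφdef]
    simp only
    rw [div_eq_one_iff_eq (hpos i x).ne']
    constructor
    · intro hx
      have : h i x = 0 := (keyF i x).1 hx
      simp [this]
    · intro hx
      have : |h i x| = 0 := by linarith
      exact (keyF i x).2 (abs_eq_zero.1 this)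
  have hφ0 : ∀ i x, x ∉ U i → φ i x = 0 := by
    intro i x hx
    have : g i x = 0 := by
      by_contra hne; exact hx ((keyU i x).2 hne)
    simp [hφdef, this]
  set H : X → ℝ := fun x => if hx : ∃ i, x ∈ U i then 1 - φ hx.choose x else 1 with hHdef
  refine ⟨H, ?_, ?_⟩
  · rw [continuous_iff_continuousAt]
    intro x
    obtain ⟨V, hVo, hxV, hV1⟩ := hd x
    by_cases hm : ∃ i, (V ∩ U i).Nonempty
    · obtain ⟨i0, hi0⟩ := hm
      have heq : ∀ y ∈ V, H y = 1 - φ i0 y := by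
        intro y hy
        by_cases hy' : ∃ i, y ∈ U i
        · have he : hy'.choose = i0 := hV1 _ _ ⟨y, hy, hy'.choose_spec⟩ hi0
          simp only [hHdef, dif_pos hy', he]
        · have hnot : y ∉ U i0 := fun hu => hy' ⟨i0, hu⟩
          simp [hHdef, dif_neg hy', hφ0 i0 y hnot]
      exact ((continuous_const.sub (hφc i0)).continuousAt).congr
        (Filter.eventuallyEq_of_mem (hVo.mem_nhds hxV) (fun y hy => (heq y hy).symm))
    · have heq : ∀ y ∈ V, H y = 1 := by
        intro y hy
        have hy' : ¬ ∃ i, y ∈ U i := fun ⟨i, hi⟩ => hm ⟨i, y, hy, hi⟩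
        simp [hHdef, dif_neg hy']
      exact (continuousAt_const (x := x) (y := (1:ℝ))).congr
        (Filter.eventuallyEq_of_mem (hVo.mem_nhds hxV) (fun y hy => (heq y hy).symm))
  · ext x
    simp only [mem_iUnion, mem_preimage, mem_singleton_iff]
    constructor
    · rintro ⟨i, hi⟩
      have hex : ∃ j, x ∈ U j := ⟨i, hFU i hi⟩
      have he : hex.choose = i := by
        obtain ⟨V, hVo, hxV, hV1⟩ := hd x
        exact hV1 _ _ ⟨x, hxV, hex.choose_spec⟩ ⟨x, hxV, hFU i hi⟩
      rw [hHdef]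
      simp only [dif_pos hex, he, (hφ1 i x).1 hi]
      ring
    · intro hx
      rw [hHdef] at hx
      by_cases hex : ∃ i, x ∈ U i
      · simp only [dif_pos hex] at hx
        have : φ hex.choose x = 1 := by linarith
        exact ⟨hex.choose, (hφ1 _ x).2 this⟩
      · simp [dif_neg hex] at hx

end Aux3
section Aux4
variable {X : Type*} [TopologicalSpace X]

lemma discreteFam_comp {I J : Type*} {U : I → Set X} (hd : DiscreteFam U) {ι : J → I}
    (hι : Function.Injective ι) : DiscreteFam (fun j => U (ι j)) := by
  intro x
  obtain ⟨V, h1, h2, h3⟩ := hd x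
  exact ⟨V, h1, h2, fun i j hi hj => hι (h3 _ _ hi hj)⟩

lemma shell_exists {F : Set X} (h : FunOpen F) :
    ∃ Fk : ℕ → Set X, (∀ k, FunClosed (Fk k)) ∧ (∀ k, Fk k ⊆ F) ∧ F = ⋃ k, Fk k := by
  obtain ⟨g, hgc, hgz⟩ := h
  have key : ∀ x, x ∈ F ↔ g x ≠ 0 := by
    intro x
    rw [← not_iff_not, not_not, ← mem_compl_iff, hgz]
    exact Iff.rfl
  refine ⟨fun k => {x | 1/((k:ℝ)+1) ≤ |g x|}, fun k => ?_, fun k x hx => ?_, ?_⟩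
  · refine ⟨fun x => max (1/((k:ℝ)+1) - |g x|) 0,
      (continuous_const.sub hgc.abs).max continuous_const, ?_⟩
    ext x
    simp only [mem_setOf_eq, mem_preimage, mem_singleton_iff, max_eq_right_iff, sub_nonpos]
  · have hxk : 1/((k:ℝ)+1) ≤ |g x| := hx
    refine (key x).2 fun h0 => ?_
    rw [h0] at hxk
    simp at hxk
    have : (0:ℝ) < 1/((k:ℝ)+1) := by positivity
    linarith
  · ext x
    simp only [mem_iUnion, mem_setOf_eq, key x]
    constructor
    · intro hne
      obtain ⟨k, hk⟩ := exists_nat_one_div_lt (abs_pos.2 hne)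
      exact ⟨k, hk.le⟩
    · intro ⟨k, hk⟩ h0
      rw [h0] at hk
      simp at hk
      have : (0:ℝ) < 1/((k:ℝ)+1) := by positivity
      linarith

end Aux4
theorem stmt7 {X Y : Type*} [TopologicalSpace X] [TopologicalSpace Y]
    (α : Ordinal) (h0 : 0 < α) (hα : α < ω₁) (hY : SigmaDisjointBase Y)
    (f : X → Y) (hf : LebClass α f) (hb : SigmaSFD f) :
    SigmaSFDAmb α f := by
  classical
  have hα0 : α ≠ 0 := h0.ne'
  obtain ⟨𝒱, hdisj, hbasis⟩ := hY
  obtain ⟨B, hBsfd, hBbase⟩ := hb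
  choose U hUdisc hUopen hUcl using hBsfd
  choose Fh hFhC hFhU hFhEq using fun n (b : ↥(B n)) => shell_exists (hUopen n b)
  -- decompositions of preimages of basic open sets
  have hpre : ∀ (m : ℕ) (V : Set Y), ∃ G : ℕ → Set X,
      (∀ j, ∃ β, ∃ _ : β < α, G j ∈ FunMul X β) ∧ (V ∈ 𝒱 m → f ⁻¹' V = ⋃ j, G j) := by
    intro m V
    by_cases hV : V ∈ 𝒱 m
    · have h1 := hf V (hbasis.isOpen (mem_iUnion.2 ⟨m, hV⟩))
      rw [funAdd_def hα0] at h1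
      obtain ⟨G, hG1, hG2⟩ := h1
      exact ⟨G, hG1, fun _ => hG2⟩
    · refine ⟨fun _ => ∅, fun j => ⟨0, h0, ?_⟩, fun h => absurd h hV⟩
      rw [funMul_zero]
      exact ⟨fun _ => 1, continuous_const, by ext x; simp⟩
  choose G hGm hGeq using hpre
  set P : ∀ n : ℕ, ℕ → Set Y → ↥(B n) → Prop :=
    fun n k V b => ((b : Set X) ∩ Fh n b k ⊆ f ⁻¹' V) ∧ ((b : Set X) ∩ Fh n b k).Nonempty
    with hP
  set Phi : ℕ → ℕ → Set Y → Set X :=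
    fun n k V => ⋃ b : {b // P n k V b}, Fh n b.1 k with hPhi
  set Om : ℕ → ℕ → Set Y → Set X :=
    fun n k V => ⋃ b : {b // P n k V b}, U n b.1 with hOm
  have hrest : ∀ n k (V : Set Y), DiscreteFam (fun b : {b // P n k V b} => U n b.1) :=
    fun n k V => discreteFam_comp (hUdisc n) Subtype.val_injective
  have hPhiC : ∀ n k V, FunClosed (Phi n k V) := fun n k V =>
    funClosed_iUnion_discrete (hrest n k V) (fun b => hUopen n b.1)
      (fun b => hFhC n b.1 k) (fun b => hFhU n b.1 k)
  have hOmO : ∀ n k V, FunOpen (Om n k V) := fun n k V =>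
    funOpen_iUnion_discrete (hrest n k V) (fun b => hUopen n b.1)
  have hPhiOm : ∀ n k V, Phi n k V ⊆ Om n k V := fun n k V =>
    iUnion_mono fun b => hFhU n b.1 k
  have hVdet : ∀ n k m (V V' : Set Y), V ∈ 𝒱 m → V' ∈ 𝒱 m → ∀ b : ↥(B n),
      P n k V b → P n k V' b → V = V' := by
    intro n k m V V' hV hV' b hb hb'
    by_contra hne
    obtain ⟨x0, hx0⟩ := hb.2
    exact Set.disjoint_left.1 (hdisj m hV hV' hne) (hb.1 hx0) (hb'.1 hx0)
  set D : ℕ → ℕ → ℕ → ℕ → Set (Set X) :=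
    fun n k m j => {d | ∃ V ∈ 𝒱 m, d = Phi n k V ∩ G m V j} with hD
  let e := Denumerable.eqv (ℕ × ℕ × ℕ × ℕ)
  refine ⟨fun i => D (e.symm i).1 (e.symm i).2.1 (e.symm i).2.2.1 (e.symm i).2.2.2,
    ?_, ?_, ?_⟩
  · -- each family is sfd
    intro i
    suffices h : ∀ n k m j, SFDSet (D n k m j) by exact h _ _ _ _
    intro n k m j
    have hmem : ∀ d : ↥(D n k m j), ∃ V, V ∈ 𝒱 m ∧ (d : Set X) = Phi n k V ∩ G m V j := by
      intro d
      simpa only [hD, mem_setOf_eq] using d.2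
    choose Vd hVd hdeq using hmem
    refine ⟨fun d => Om n k (Vd d), ?_, fun d => hOmO n k (Vd d), fun d => ?_⟩
    · intro x
      obtain ⟨V0, hV0o, hxV0, hone⟩ := hUdisc n x
      refine ⟨V0, hV0o, hxV0, ?_⟩
      intro d1 d2 h1 h2
      obtain ⟨y1, hy1V, hy1⟩ := h1
      obtain ⟨y2, hy2V, hy2⟩ := h2
      rw [hOm] at hy1 hy2
      obtain ⟨b1, hb1⟩ := mem_iUnion.1 hy1
      obtain ⟨b2, hb2⟩ := mem_iUnion.1 hy2
      have hbb : b1.1 = b2.1 := hone _ _ ⟨y1, hy1V, hb1⟩ ⟨y2, hy2V, hb2⟩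
      have hVeq : Vd d1 = Vd d2 :=
        hVdet n k m _ _ (hVd d1) (hVd d2) b1.1 b1.2 (hbb ▸ b2.2)
      apply Subtype.ext
      rw [hdeq d1, hdeq d2, hVeq]
    · have h1 : (d : Set X) ⊆ Phi n k (Vd d) := by
        rw [hdeq d]; exact inter_subset_left
      exact (closure_minimal h1 (funClosed_isClosed (hPhiC n k (Vd d)))).trans
        (hPhiOm n k (Vd d))
  · -- ambiguity
    intro i d hd
    simp only [hD, mem_setOf_eq] at hd
    obtain ⟨V, hV, rfl⟩ := hd
    obtain ⟨β, hβ, hGmem⟩ := hGm (e.symm i).2.2.1 V (e.symm i).2.2.2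
    have h1 : Phi (e.symm i).1 (e.symm i).2.1 V ∩ G (e.symm i).2.2.1 V (e.symm i).2.2.2
        ∈ FunMul X β := funClosed_inter_funMul (hPhiC _ _ V) hGmem
    exact ⟨funMul_mem_funAdd hβ h1, funMul_mono hβ h1⟩
  · -- base property
    intro W hW
    refine ⟨{d | (∃ i, d ∈ D (e.symm i).1 (e.symm i).2.1 (e.symm i).2.2.1 (e.symm i).2.2.2)
        ∧ d ⊆ f ⁻¹' W}, ?_, ?_⟩
    · intro d hd
      exact mem_iUnion.2 hd.1
    · apply Subset.antisymm
      · intro x hx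
        obtain ⟨V, hVmem, hfxV, hVW⟩ := hbasis.exists_subset_of_mem_open hx hW
        obtain ⟨m, hVm⟩ := mem_iUnion.1 hVmem
        have hxV : x ∈ f ⁻¹' V := hfxV
        rw [hGeq m V hVm] at hxV
        obtain ⟨j, hxG⟩ := mem_iUnion.1 hxV
        obtain ⟨S0, hS0sub, hS0eq⟩ := hBbase V (hbasis.isOpen hVmem)
        have hxS0 : x ∈ ⋃₀ S0 := hS0eq ▸ hfxV
        obtain ⟨b0, hb0S, hxb0⟩ := hxS0
        obtain ⟨n, hb0n⟩ := mem_iUnion.1 (hS0sub hb0S)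
        set b : ↥(B n) := ⟨b0, hb0n⟩ with hbdef
        have hb0V : b0 ⊆ f ⁻¹' V := by
          rw [hS0eq]
          exact subset_sUnion_of_mem hb0S
        have hxU : x ∈ U n b := hUcl n b (subset_closure hxb0)
        rw [hFhEq n b] at hxU
        obtain ⟨k, hxF⟩ := mem_iUnion.1 hxU
        have hPb : P n k V b :=
          ⟨(inter_subset_left).trans hb0V, ⟨x, hxb0, hxF⟩⟩
        have hxPhi : x ∈ Phi n k V := by
          rw [hPhi]
          exact mem_iUnion.2 ⟨⟨b, hPb⟩, hxF⟩
        refine ⟨Phi n k V ∩ G m V j, ⟨⟨e (n, k, m, j), ?_⟩, ?_⟩, hxPhi, hxG⟩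
        · simp only [Equiv.symm_apply_apply, hD, mem_setOf_eq]
          exact ⟨V, hVm, rfl⟩
        · refine (inter_subset_right).trans ?_
          refine Subset.trans ?_ (preimage_mono hVW)
          rw [hGeq m V hVm]
          exact subset_iUnion _ j
      · exact sUnion_subset fun d hd => hd.2
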